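/- For the graph H_{t,0}∘R_k (k copies of K_4 sharing a vertex u, with t pendant vertices attached at u), the spectral radius ρ satisfies ρ³ − 2ρ² − (3k+t)ρ + 2t = 0. -/

import Mathlib

open Finset

/-- Real adjacency matrix of a simple graph. -/
noncomputable def adjMat {V : Type*} [Fintype V] (G : SimpleGraph V) : Matrix V V ℝ :=
  Matrix.of fun i j => haveI := Classical.dec (G.Adj i j); if G.Adj i j then (1 : ℝ) else 0

/-- `μ` is an eigenvalue of the adjacency matrix of `G`. -/
def IsAdjEigenvalue {V : Type*} [Fintype V] (G : SimpleGraph V) (μ : ℝ) : Prop :=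
  ∃ x : V → ℝ, x ≠ 0 ∧ (adjMat G).mulVec x = μ • x

/-- `ρ` is the spectral radius (largest adjacency eigenvalue) of `G`. -/
def IsSpecRad {V : Type*} [Fintype V] (G : SimpleGraph V) (ρ : ℝ) : Prop :=
  IsAdjEigenvalue G ρ ∧ ∀ μ : ℝ, IsAdjEigenvalue G μ → μ ≤ ρ

/-- `G` contains a copy of `F` as a subgraph. -/
def Contains {V W : Type*} (G : SimpleGraph V) (F : SimpleGraph W) : Prop :=
  ∃ f : W → V, Function.Injective f ∧ ∀ a b, F.Adj a b → G.Adj (f a) (f b)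

/-- `G` contains a cycle of length `t`. -/
def HasCycleLen {V : Type*} (G : SimpleGraph V) (t : ℕ) : Prop :=
  ∃ (v : V) (w : G.Walk v v), w.IsCycle ∧ w.length = t

/-- `HR k t` : `k` copies of `K₄` sharing the single common vertex `Sum.inl ()`,
together with `t` pendant vertices attached to that common vertex. -/
def HR (k t : ℕ) : SimpleGraph (Unit ⊕ (Fin k × Fin 3) ⊕ Fin t) :=
  SimpleGraph.fromRel (fun a b =>
    match a, b with
    | Sum.inl _, _ => True
    | Sum.inr (Sum.inl p), Sum.inr (Sum.inl q) => p.1 = q.1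
    | _, _ => False)

variable {k t : ℕ}

lemma hr_adj_u (v : Unit ⊕ (Fin k × Fin 3) ⊕ Fin t) :
    (HR k t).Adj (Sum.inl ()) v ↔ v ≠ Sum.inl () := by
  simp [HR, SimpleGraph.fromRel_adj]; tauto

lemma hr_adj_mid (p q : Fin k × Fin 3) :
    (HR k t).Adj (Sum.inr (Sum.inl p)) (Sum.inr (Sum.inl q)) ↔ p ≠ q ∧ p.1 = q.1 := by
  simp [HR, SimpleGraph.fromRel_adj]; tauto

lemma hr_adj_mid_pend (p : Fin k × Fin 3) (j : Fin t) :
    ¬ (HR k t).Adj (Sum.inr (Sum.inl p)) (Sum.inr (Sum.inr j)) := by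
  simp [HR, SimpleGraph.fromRel_adj]

lemma hr_adj_pend_pend (i j : Fin t) :
    ¬ (HR k t).Adj (Sum.inr (Sum.inr i)) (Sum.inr (Sum.inr j)) := by
  simp [HR, SimpleGraph.fromRel_adj]

lemma adjMat_apply {V : Type*} [Fintype V] (G : SimpleGraph V) [DecidableRel G.Adj]
    (i j : V) : adjMat G i j = if G.Adj i j then (1 : ℝ) else 0 := by
  simp [adjMat]

lemma mulVec_eq {V : Type*} [Fintype V] (G : SimpleGraph V) [DecidableRel G.Adj]
    (x : V → ℝ) (v : V) :
    (adjMat G).mulVec x v = ∑ w : V, (if G.Adj v w then x w else 0) := by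
  simp only [Matrix.mulVec, dotProduct, adjMat, Matrix.of_apply]
  apply Finset.sum_congr rfl
  intro w _
  by_cases h : G.Adj v w <;> simp [h]

noncomputable instance : DecidableRel (HR k t).Adj := fun _ _ => Classical.dec _

lemma mulVec_u (x : (Unit ⊕ (Fin k × Fin 3) ⊕ Fin t) → ℝ) :
    (adjMat (HR k t)).mulVec x (Sum.inl ()) =
      (∑ p : Fin k × Fin 3, x (Sum.inr (Sum.inl p))) + ∑ j : Fin t, x (Sum.inr (Sum.inr j)) := by
  rw [mulVec_eq]
  rw [Fintype.sum_sum_type]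
  simp only [Fintype.sum_sum_type]
  have h1 : ∀ v : Unit ⊕ (Fin k × Fin 3) ⊕ Fin t, (HR k t).Adj (Sum.inl ()) v ↔ v ≠ Sum.inl () :=
    hr_adj_u
  simp [h1]

lemma mulVec_mid (x : (Unit ⊕ (Fin k × Fin 3) ⊕ Fin t) → ℝ) (p : Fin k × Fin 3) :
    (adjMat (HR k t)).mulVec x (Sum.inr (Sum.inl p)) =
      x (Sum.inl ()) + (∑ j : Fin 3, x (Sum.inr (Sum.inl (p.1, j)))) - x (Sum.inr (Sum.inl p)) := by
  rw [mulVec_eq]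
  rw [Fintype.sum_sum_type]
  simp only [Fintype.sum_sum_type]
  have hu : (HR k t).Adj (Sum.inr (Sum.inl p)) (Sum.inl ()) := by
    exact ((HR k t).adj_symm ((hr_adj_u _).2 (by simp)))
  have hpend : ∀ j : Fin t, ¬ (HR k t).Adj (Sum.inr (Sum.inl p)) (Sum.inr (Sum.inr j)) :=
    hr_adj_mid_pend p
  simp only [hu, if_true, hpend, if_false, Finset.sum_const_zero, add_zero]
  have : ∀ q : Fin k × Fin 3,
      (if (HR k t).Adj (Sum.inr (Sum.inl p)) (Sum.inr (Sum.inl q)) then x (Sum.inr (Sum.inl q)) else 0)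
      = (if q.1 = p.1 then x (Sum.inr (Sum.inl q)) else 0) - (if q = p then x (Sum.inr (Sum.inl q)) else 0) := by
    intro q
    by_cases hq : q = p
    · subst hq; simp [hr_adj_mid]
    · by_cases h1 : q.1 = p.1 <;>
        simp only [hr_adj_mid, hq, h1, Ne.symm hq, ne_eq, not_false_eq_true, and_true, if_true,
          if_false, sub_zero, and_false] <;> simp_all [eq_comm]
  rw [Finset.sum_congr rfl (fun q _ => this q), Finset.sum_sub_distrib]
  rw [Fintype.sum_prod_type]
  have h2 : ∀ i : Fin k, (∑ j : Fin 3, if (i, j).1 = p.1 then x (Sum.inr (Sum.inl (i, j))) else 0)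
      = if i = p.1 then (∑ j : Fin 3, x (Sum.inr (Sum.inl (i, j)))) else 0 := by
    intro i
    by_cases hi : i = p.1 <;> simp [hi]
  rw [Finset.sum_congr rfl (fun i _ => h2 i), Finset.sum_ite_eq' Finset.univ p.1, Finset.sum_ite_eq' Finset.univ p]
  simp
  ring

lemma mulVec_pend (x : (Unit ⊕ (Fin k × Fin 3) ⊕ Fin t) → ℝ) (j : Fin t) :
    (adjMat (HR k t)).mulVec x (Sum.inr (Sum.inr j)) = x (Sum.inl ()) := by
  rw [mulVec_eq]
  rw [Fintype.sum_sum_type]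
  simp only [Fintype.sum_sum_type]
  have hu : (HR k t).Adj (Sum.inr (Sum.inr j)) (Sum.inl ()) :=
    ((HR k t).adj_symm ((hr_adj_u _).2 (by simp)))
  have h1 : ∀ q : Fin k × Fin 3, ¬ (HR k t).Adj (Sum.inr (Sum.inr j)) (Sum.inr (Sum.inl q)) :=
    fun q h => hr_adj_mid_pend q j ((HR k t).adj_symm h)
  simp [hu, h1, hr_adj_pend_pend]

/-- Construction: any root ρ₀ > 2 of the cubic is an eigenvalue. -/
lemma eig_of_root (ρ₀ : ℝ) (h2 : 2 < ρ₀)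
    (hc : ρ₀ ^ 3 - 2 * ρ₀ ^ 2 - (3 * (k : ℝ) + t) * ρ₀ + 2 * t = 0) :
    IsAdjEigenvalue (HR k t) ρ₀ := by
  refine ⟨fun v => match v with
    | Sum.inl _ => ρ₀ * (ρ₀ - 2)
    | Sum.inr (Sum.inl _) => ρ₀
    | Sum.inr (Sum.inr _) => ρ₀ - 2, ?_, ?_⟩
  · intro h
    have := congrFun h (Sum.inl ())
    simp at this
    rcases this with h | h
    · linarith
    · linarith
  · funext v
    match v with
    | Sum.inl () =>
      rw [mulVec_u]
      simp only [Pi.smul_apply, smul_eq_mul, Finset.sum_const, Finset.card_univ,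
        Fintype.card_prod, Fintype.card_fin, nsmul_eq_mul]
      push_cast
      nlinarith [hc]
    | Sum.inr (Sum.inl p) =>
      rw [mulVec_mid]
      simp only [Pi.smul_apply, smul_eq_mul, Finset.sum_const, Finset.card_univ,
        Fintype.card_fin, nsmul_eq_mul]
      ring
    | Sum.inr (Sum.inr j) =>
      rw [mulVec_pend]
      simp only [Pi.smul_apply, smul_eq_mul]

/-- Classification: any eigenvalue > 2 is a root of the cubic. -/
lemma root_of_eig (μ : ℝ) (h2 : 2 < μ) (h : IsAdjEigenvalue (HR k t) μ) :
    μ ^ 3 - 2 * μ ^ 2 - (3 * (k : ℝ) + t) * μ + 2 * t = 0 := by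
  obtain ⟨x, hx0, hx⟩ := h
  set a := x (Sum.inl ()) with ha
  set s : Fin k → ℝ := fun i => ∑ j : Fin 3, x (Sum.inr (Sum.inl (i, j))) with hs
  have equ : (∑ p : Fin k × Fin 3, x (Sum.inr (Sum.inl p))) + ∑ j : Fin t, x (Sum.inr (Sum.inr j))
      = μ * a := by
    have := congrFun hx (Sum.inl ())
    rw [mulVec_u] at this
    simpa using this
  have eqmid : ∀ p : Fin k × Fin 3,
      a + s p.1 - x (Sum.inr (Sum.inl p)) = μ * x (Sum.inr (Sum.inl p)) := by
    intro p
    have := congrFun hx (Sum.inr (Sum.inl p))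
    rw [mulVec_mid] at this
    simpa [hs] using this
  have eqpend : ∀ j : Fin t, a = μ * x (Sum.inr (Sum.inr j)) := by
    intro j
    have := congrFun hx (Sum.inr (Sum.inr j))
    rw [mulVec_pend] at this
    simpa using this
  have hμ0 : μ ≠ 0 := by linarith
  have hμ2 : μ - 2 ≠ 0 := by intro h; apply absurd h; linarith
  -- sum of eqmid over j for fixed i gives s i
  have hsi : ∀ i : Fin k, s i = 3 * a / (μ - 2) := by
    intro i
    have := Finset.sum_congr rfl (fun j (_ : j ∈ (Finset.univ : Finset (Fin 3))) => eqmid (i, j))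
    simp only [Finset.sum_sub_distrib, Finset.sum_add_distrib, Finset.sum_const,
      Finset.card_univ, Fintype.card_fin, nsmul_eq_mul, ← Finset.mul_sum] at this
    have hthis : 3 * a + 3 * s i - s i = μ * s i := by
      simpa [hs] using this
    field_simp
    linarith
  have hxp : ∀ j : Fin t, x (Sum.inr (Sum.inr j)) = a / μ := by
    intro j
    have := eqpend j
    field_simp
    linarith
  -- main equation
  have hmain : (k : ℝ) * (3 * a / (μ - 2)) + t * (a / μ) = μ * a := by
    rw [← equ, Fintype.sum_prod_type]
    have h1 : (∑ i : Fin k, ∑ j : Fin 3, x (Sum.inr (Sum.inl (i, j)))) = ∑ i : Fin k, s i := rfl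
    rw [h1]
    rw [Finset.sum_congr rfl (fun i _ => hsi i), Finset.sum_congr rfl (fun j _ => hxp j)]
    simp [Finset.sum_const, mul_comm]
  by_cases haz : a = 0
  · -- then x = 0, contradiction
    exfalso
    apply hx0
    funext v
    have hs0 : ∀ i, s i = 0 := fun i => by rw [hsi i, haz]; ring
    match v with
    | Sum.inl () => exact haz
    | Sum.inr (Sum.inl p) =>
      have := eqmid p
      rw [haz, hs0] at this
      have : (μ + 1) * x (Sum.inr (Sum.inl p)) = 0 := by linarith
      have hμ1 : μ + 1 ≠ 0 := by intro h; apply absurd h; linarith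
      simpa [hμ1] using mul_eq_zero.mp this |>.resolve_left hμ1
    | Sum.inr (Sum.inr j) => rw [hxp j, haz]; simp
  · have := hmain
    field_simp at this
    have hfin : a * (μ ^ 3 - 2 * μ ^ 2 - (3 * (k : ℝ) + t) * μ + 2 * t) = 0 := by
      linear_combination (-a) * this
    exact (mul_eq_zero.mp hfin).resolve_left haz

theorem stmt13 (k t : ℕ) (hk : 1 ≤ k)
    (ρ : ℝ) (hρ : IsSpecRad (HR k t) ρ) :
    ρ ^ 3 - 2 * ρ ^ 2 - (3 * (k : ℝ) + t) * ρ + 2 * t = 0 := by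
  obtain ⟨ρ₀, hρ₀2, hρ₀c⟩ : ∃ ρ₀ : ℝ, 2 < ρ₀ ∧
      ρ₀ ^ 3 - 2 * ρ₀ ^ 2 - (3 * (k : ℝ) + t) * ρ₀ + 2 * t = 0 := by
    set f : ℝ → ℝ := fun x => x ^ 3 - 2 * x ^ 2 - (3 * (k : ℝ) + t) * x + 2 * t with hf
    have hK : (1 : ℝ) ≤ k := by exact_mod_cast hk
    have hT : (0 : ℝ) ≤ t := by positivity
    set M : ℝ := 3 * k + t + 3 with hM
    have h2M : (2 : ℝ) ≤ M := by linarith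
    have hcont : ContinuousOn f (Set.Icc 2 M) := by fun_prop
    have hf2 : f 2 < 0 := by simp only [hf]; nlinarith
    have hfM : 0 < f M := by simp only [hf, hM]; nlinarith
    have := intermediate_value_Icc h2M hcont
    have hmem : (0 : ℝ) ∈ Set.Icc (f 2) (f M) := ⟨le_of_lt hf2, le_of_lt hfM⟩
    obtain ⟨ρ₀, hρ₀mem, hρ₀⟩ := this hmem
    refine ⟨ρ₀, ?_, hρ₀⟩
    rcases lt_or_eq_of_le hρ₀mem.1 with h | h
    · exact h
    · exfalso; rw [← h] at hρ₀; rw [hρ₀] at hf2; exact lt_irrefl 0 hf2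
  have hle : ρ₀ ≤ ρ := hρ.2 ρ₀ (eig_of_root ρ₀ hρ₀2 hρ₀c)
  exact root_of_eig ρ (lt_of_lt_of_le hρ₀2 hle) hρ.1
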